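/- Let E be a finite-dimensional real inner product space, let M : E →ₗ[ℝ] E be self-adjoint and positive semidefinite, and let V be a subspace of E with (ker M) ⊓ V = ⊥, so that N := M ∘ P_V + P_{V⊥} is bijective; define the Bott–Duffin inverse A := P_V ∘ N⁻¹. Then for every d in the image M(V) := {M w : w ∈ V}, the vector u := A d lies in V, satisfies M u = d, and is the unique element of V with M u = d. -/

import Mathlib

open RealInnerProductSpace

/-- The orthogonal projection onto a subspace, as a linear endomorphism. -/
noncomputable def orthProj {E : Type*} [NormedAddCommGroup E] [InnerProductSpace ℝ E]
    [FiniteDimensional ℝ E] (V : Submodule ℝ E) : E →ₗ[ℝ] E :=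
  (V.subtypeL.comp (V.orthogonalProjection)).toLinearMap

lemma orthProj_mem {E : Type*} [NormedAddCommGroup E] [InnerProductSpace ℝ E]
    [FiniteDimensional ℝ E] (V : Submodule ℝ E) {w : E} (hw : w ∈ V) :
    orthProj V w = w := by
  simp [orthProj, V.orthogonalProjectionOnto_mem_subspace_eq_self ⟨w, hw⟩]

lemma orthProj_orth_mem {E : Type*} [NormedAddCommGroup E] [InnerProductSpace ℝ E]
    [FiniteDimensional ℝ E] (V : Submodule ℝ E) {w : E} (hw : w ∈ V) :
    orthProj Vᗮ w = 0 := by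
  have : w ∈ Vᗮᗮ := Submodule.le_orthogonal_orthogonal V hw
  simp [orthProj, Submodule.orthogonalProjectionOnto_apply_of_mem_orthogonal this]

theorem bott_duffin_solves_constrained_system
    {E : Type*} [NormedAddCommGroup E] [InnerProductSpace ℝ E] [FiniteDimensional ℝ E]
    (M : E →ₗ[ℝ] E)
    (hMsym : ∀ x y : E, ⟪M x, y⟫ = ⟪x, M y⟫)
    (hMpsd : ∀ x : E, 0 ≤ ⟪M x, x⟫)
    (V : Submodule ℝ E)
    (hker : LinearMap.ker M ⊓ V = ⊥)
    (N : E →ₗ[ℝ] E) (hN : N = M ∘ₗ orthProj V + orthProj Vᗮ)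
    (hNbij : Function.Bijective N)
    (A : E →ₗ[ℝ] E)
    (hA : A = orthProj V ∘ₗ (LinearEquiv.ofBijective N hNbij).symm.toLinearMap)
    (d : E) (hd : ∃ w ∈ V, M w = d) :
    A d ∈ V ∧ M (A d) = d ∧ ∀ u ∈ V, M u = d → u = A d := by
  obtain ⟨w, hwV, hwd⟩ := hd
  have hNw : N w = d := by
    rw [hN]
    simp [LinearMap.comp_apply, orthProj_mem V hwV, orthProj_orth_mem V hwV, hwd]
  have hinv : (LinearEquiv.ofBijective N hNbij).symm d = w := by
    apply (LinearEquiv.ofBijective N hNbij).injective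
    simp [LinearEquiv.apply_symm_apply]
    exact hNw.symm ▸ rfl
  have hAd : A d = w := by
    rw [hA]
    simp [LinearMap.comp_apply, hinv, orthProj_mem V hwV]
  refine ⟨hAd ▸ hwV, hAd ▸ hwd, ?_⟩
  intro u huV hud
  rw [hAd]
  have : u - w ∈ LinearMap.ker M ⊓ V := by
    refine ⟨?_, V.sub_mem huV hwV⟩
    simp [LinearMap.mem_ker, map_sub, hud, hwd]
  rw [hker] at this
  have := Submodule.mem_bot ℝ |>.1 this
  exact sub_eq_zero.1 this
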